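/- Let 𝒞 be a pretriangulated category with shift functor [1], let U and V be objects of 𝒞 with U ≅ U[2] and V ≅ V[2], and let X → V' →^f U → X[1] be a distinguished triangle in which f: V' → U is a minimal right (add V)-approximation of U. Then X ≅ X[2]. -/

import Mathlib

open CategoryTheory CategoryTheory.Limits CategoryTheory.Pretriangulated

universe v u

variable {C : Type u} [Category.{v} C]

/-- `X` belongs to `add V`: `X` is a direct summand of a finite direct sum of copies of `V`. -/
def InAdd [Preadditive C] [HasFiniteBiproducts C] (V X : C) : Prop :=
  ∃ (n : ℕ) (i : X ⟶ ⨁ (fun _ : Fin n => V)) (p : (⨁ fun _ : Fin n => V) ⟶ X),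
    i ≫ p = 𝟙 X

/-- `f : V' → U` is a right `(add V)`-approximation of `U`: `V' ∈ add V` and every morphism
`W → U` with `W ∈ add V` factors through `f`. -/
def IsRightAddApprox [Preadditive C] [HasFiniteBiproducts C] (V : C) {V' U : C}
    (f : V' ⟶ U) : Prop :=
  InAdd V V' ∧ ∀ (W : C), InAdd V W → ∀ g : W ⟶ U, ∃ h : W ⟶ V', h ≫ f = g

/-- `f` is right minimal: every endomorphism `φ` of its source with `φ ≫ f = f` is an
isomorphism. -/
def RightMinimal {V' U : C} (f : V' ⟶ U) : Prop :=
  ∀ φ : V' ⟶ V', φ ≫ f = f → IsIso φ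

lemma inAdd_map [Preadditive C] [HasFiniteBiproducts C] (F : C ⥤ C) [F.Additive]
    {V W : C} (eV : F.obj V ≅ V) (h : InAdd V W) : InAdd V (F.obj W) := by
  obtain ⟨n, i, p, hip⟩ := h
  let e2 : (⨁ F.obj ∘ fun _ : Fin n => V) ≅ ⨁ (fun _ : Fin n => V) :=
    biproduct.mapIso (fun _ => eV)
  refine ⟨n, F.map i ≫ (F.mapBiproduct (fun _ : Fin n => V)).hom ≫ e2.hom,
    e2.inv ≫ (F.mapBiproduct (fun _ : Fin n => V)).inv ≫ F.map p, ?_⟩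
  simp only [Category.assoc, Iso.hom_inv_id_assoc, ← F.map_comp, hip, F.map_id]

/-- Let `𝒞` be a pretriangulated category, `U ≅ U[2]`, `V ≅ V[2]`, and let
`X ⟶ V' ⟶ U ⟶ X[1]` be a distinguished triangle in which `f : V' ⟶ U` is a minimal right
`(add V)`-approximation of `U`.  Then `X ≅ X[2]`. -/
theorem stmt_15 {C : Type u} [Category.{v} C] [Preadditive C] [HasZeroObject C]
    [HasShift C ℤ] [∀ n : ℤ, (shiftFunctor C n).Additive] [Pretriangulated C]
    [HasFiniteBiproducts C]
    (U V X V' : C) (hU : Nonempty (U ≅ U⟦(2 : ℤ)⟧)) (hV : Nonempty (V ≅ V⟦(2 : ℤ)⟧))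
    (g : X ⟶ V') (f : V' ⟶ U) (h : U ⟶ X⟦(1 : ℤ)⟧)
    (htri : Triangle.mk g f h ∈ distTriang C)
    (happrox : IsRightAddApprox V f) (hmin : RightMinimal f) :
    Nonempty (X ≅ X⟦(2 : ℤ)⟧) := by
  obtain ⟨e⟩ := hU
  obtain ⟨eV⟩ := hV
  obtain ⟨hV', happ⟩ := happrox
  set E : C ≌ C := { shiftEquiv C (2 : ℤ) with functor := shiftFunctor C (2 : ℤ) } with hE
  have hsgn : (2 : ℤ).negOnePow = 1 := Int.negOnePow_even 2 ⟨1, by norm_num⟩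
  set f2 : (V'⟦(2:ℤ)⟧) ⟶ U := (E.functor.map f) ≫ e.inv with hf2
  -- the shifted triangle, with third object replaced by U
  have hT3 : Triangle.mk (E.functor.map g) f2
      (e.hom ≫ ((Triangle.shiftFunctor C 2).obj (Triangle.mk g f h)).mor₃) ∈ distTriang C := by
    refine isomorphic_distinguished _ (Triangle.shift_distinguished _ htri 2) _ ?_
    refine Triangle.isoMk _ _ (Iso.refl _) (Iso.refl _) e ?_ ?_ ?_
    · erw [Category.comp_id, Category.id_comp]
      simp [Triangle.shiftFunctor, hsgn, E]
      rfl
    · erw [Category.id_comp]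
      erw [Category.assoc, Iso.inv_hom_id, Category.comp_id]
      simp [E, Triangle.shiftFunctor, hsgn]
      rfl
    · erw [Iso.refl_hom, CategoryTheory.Functor.map_id, Category.comp_id]
      rfl
  set T3 := Triangle.mk (E.functor.map g) f2
      (e.hom ≫ ((Triangle.shiftFunctor C 2).obj (Triangle.mk g f h)).mor₃) with hT3def
  -- V'⟦2⟧ is in add V
  have hVshift : InAdd V (V'⟦(2:ℤ)⟧) := inAdd_map (shiftFunctor C (2:ℤ)) eV.symm hV'
  -- f2 is a right add V approximation
  have happ2 : ∀ (W : C), InAdd V W → ∀ g₀ : W ⟶ U, ∃ h₀ : W ⟶ V'⟦(2:ℤ)⟧, h₀ ≫ f2 = g₀ := by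
    intro W hW g₀
    haveI : E.inverse.Additive := (inferInstance : (shiftFunctor C (-2:ℤ)).Additive)
    have eVm : E.inverse.obj V ≅ V := E.inverse.mapIso eV ≪≫ (E.unitIso.app V).symm
    have hW' : InAdd V (E.inverse.obj W) := inAdd_map E.inverse eVm hW
    obtain ⟨k, hk⟩ := happ _ hW' (E.inverse.map (g₀ ≫ e.hom) ≫ E.unitInv.app U)
    refine ⟨E.counitInv.app W ≫ E.functor.map k, ?_⟩
    rw [hf2, Category.assoc, ← Category.assoc (E.functor.map k), ← E.functor.map_comp, hk]
    simp only [Functor.map_comp, Equivalence.fun_inv_map, Category.assoc,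
      Iso.inv_hom_id_app_assoc]
    have h4 : E.counitInv.app ((shiftFunctor C (2:ℤ)).obj U) ≫
        E.functor.map (E.unitInv.app U) = 𝟙 _ := E.counitInv_functor_comp U
    rw [← Category.assoc (E.counitInv.app ((shiftFunctor C (2:ℤ)).obj U))
      (E.functor.map (E.unitInv.app U)) e.inv, h4]
    simp
  -- f factors through f2 and vice versa
  obtain ⟨a, ha⟩ := happ2 V' hV' f
  obtain ⟨b, hb⟩ := happ (V'⟦(2:ℤ)⟧) hVshift f2
  have hab : IsIso (a ≫ b) := hmin _ (by rw [Category.assoc, hb, ha])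
  have hba : IsIso (b ≫ a) := by
    have hfull : (b ≫ a) ≫ f2 = f2 := by rw [Category.assoc, ha, hb]
    set ψ := E.functor.preimage (b ≫ a) with hψ
    have hψf : ψ ≫ f = f := by
      apply E.functor.map_injective
      rw [E.functor.map_comp, Functor.map_preimage]
      rw [hf2] at hfull
      rw [← cancel_mono e.inv, Category.assoc]
      exact hfull
    have : IsIso ψ := hmin ψ hψf
    have : b ≫ a = E.functor.map ψ := (Functor.map_preimage _ _).symm
    rw [this]
    infer_instance
  have hIsoa : IsIso a := by
    have h1 : a ≫ (b ≫ inv (a ≫ b)) = 𝟙 _ := by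
      rw [← Category.assoc]; exact IsIso.hom_inv_id _
    have h2 : (inv (b ≫ a) ≫ b) ≫ a = 𝟙 _ := by
      rw [Category.assoc]; exact IsIso.inv_hom_id _
    have h3 : b ≫ inv (a ≫ b) = inv (b ≫ a) ≫ b := by
      calc b ≫ inv (a ≫ b) = ((inv (b ≫ a) ≫ b) ≫ a) ≫ b ≫ inv (a ≫ b) := by rw [h2]; simp
      _ = (inv (b ≫ a) ≫ b) ≫ (a ≫ (b ≫ inv (a ≫ b))) := by simp only [Category.assoc]
      _ = inv (b ≫ a) ≫ b := by rw [h1]; simp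
    exact ⟨⟨b ≫ inv (a ≫ b), h1, by rw [h3]; exact h2⟩⟩
  -- conclude via rotation and isoTriangleOfIso₁₂
  have hrot1 : (Triangle.mk g f h).rotate ∈ distTriang C := rot_of_distTriang _ htri
  have hrot3 : T3.rotate ∈ distTriang C := rot_of_distTriang _ hT3
  have comm : (Triangle.mk g f h).rotate.mor₁ ≫ (Iso.refl U).hom =
      (asIso a).hom ≫ T3.rotate.mor₁ := by
    dsimp; erw [Category.comp_id]; exact ha.symm
  have iso := isoTriangleOfIso₁₂ _ _ hrot1 hrot3 (@asIso _ _ _ _ a hIsoa) (Iso.refl U) comm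
  have isoX : (X⟦(1:ℤ)⟧) ≅ ((X⟦(2:ℤ)⟧)⟦(1:ℤ)⟧) := Triangle.π₃.mapIso iso
  exact ⟨(shiftFunctor C (1:ℤ)).preimageIso isoX⟩
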